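/- Let f be monotone submodular with f(∅)=0, let S_opt ⊆ V be an optimal cover (f(S_opt) = f(V)) with cost OPT = ∑_{v ∈ S_opt} w(v), and let τ, ε > 0 satisfy τ ≤ f(V)·ε / OPT. Suppose G ⊆ V is a set such that every element u ∈ V \ G has marginal density (f(G∪{u}) - f(G))/w(u) < τ with respect to G. Then f(G) ≥ (1 - ε)·f(V). -/
import Mathlib

lemma marg_sum {V : Type*} [DecidableEq V]
    (f : Finset V → ℝ)
    (hmono : ∀ A B : Finset V, A ⊆ B → f A ≤ f B)
    (hsub : ∀ A B : Finset V, f A + f B ≥ f (A ∪ B) + f (A ∩ B))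
    (G : Finset V) (S : Finset V) :
    f (G ∪ S) - f G ≤ ∑ u ∈ S, (f (insert u G) - f G) := by
  induction S using Finset.induction with
  | empty => simp
  | @insert a S ha ih =>
    rw [Finset.sum_insert ha]
    have h1 : f (G ∪ insert a S) ≤ f (insert a G) + f (G ∪ S) - f G := by
      have hs := hsub (insert a G) (G ∪ S)
      have hu : insert a G ∪ (G ∪ S) = G ∪ insert a S := by
        ext x; simp [Finset.mem_insert, Finset.mem_union]
      have hi : G ⊆ insert a G ∩ (G ∪ S) := fun x hx => by simp [hx]
      have hm := hmono G _ hi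
      rw [hu] at hs
      linarith
    linarith

theorem stmt4 {V : Type*} [Fintype V] [DecidableEq V]
    (f : Finset V → ℝ)
    (hmono : ∀ A B : Finset V, A ⊆ B → f A ≤ f B)
    (hsub : ∀ A B : Finset V, f A + f B ≥ f (A ∪ B) + f (A ∩ B))
    (hnorm : f ∅ = 0)
    (w : V → ℝ) (hw : ∀ v, 0 < w v)
    (ε : ℝ) (hε : 0 < ε)
    (Sopt : Finset V) (hopt : f Sopt = f Finset.univ)
    (τ : ℝ) (hτ : 0 < τ)
    (hτle : τ ≤ f Finset.univ * ε / (∑ v ∈ Sopt, w v))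
    (G : Finset V)
    (hdens : ∀ u ∈ Finset.univ \ G, (f (insert u G) - f G) / w u < τ) :
    f G ≥ (1 - ε) * f Finset.univ := by
  rcases Finset.eq_empty_or_nonempty Sopt with he | hne
  · have h0 : f Finset.univ = 0 := by rw [← hopt, he, hnorm]
    have hG0 : f G ≥ 0 := by rw [← hnorm]; exact hmono _ _ (Finset.empty_subset G)
    rw [h0]; linarith
  · have hOPT : 0 < ∑ v ∈ Sopt, w v :=
      Finset.sum_pos (fun v _ => hw v) hne
    have key : f (G ∪ Sopt) - f G ≤ ∑ u ∈ Sopt, (f (insert u G) - f G) :=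
      marg_sum f hmono hsub G Sopt
    have hterm : ∀ u ∈ Sopt, f (insert u G) - f G ≤ τ * w u := by
      intro u _
      by_cases hu : u ∈ G
      · rw [Finset.insert_eq_self.mpr hu]
        have := mul_pos hτ (hw u); linarith
      · have := hdens u (by simp [hu])
        have := (div_lt_iff₀ (hw u)).mp this
        linarith
    have hsum : ∑ u ∈ Sopt, (f (insert u G) - f G) ≤ τ * ∑ v ∈ Sopt, w v := by
      rw [Finset.mul_sum]; exact Finset.sum_le_sum hterm
    have htau : τ * ∑ v ∈ Sopt, w v ≤ f Finset.univ * ε :=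
      (le_div_iff₀ hOPT).mp hτle
    have hcov : f Finset.univ ≤ f (G ∪ Sopt) := by
      calc f Finset.univ = f Sopt := hopt.symm
        _ ≤ f (G ∪ Sopt) := hmono _ _ (Finset.subset_union_right)
    nlinarith
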